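/- arXiv:1111.4578 — 3 statements merged into one kernel-verified Lean document; each statement's English description precedes it below -/
import Mathlib

section
/- Let 0 < β < π and ξ₂ ∈ [π−β, π+β]. Then for every m ∈ 2πℕ₀ (i.e. m = 2πn for some natural number n ≥ 0), the minimum over m₂ ∈ 2πℤ of |(m₂ + ξ₂)² − (m + 2π)²| is at least (2m + 3π + β)(π − β). -/
open Real

/-- Minimum estimate: for `0 < β < π`, `ξ₂ ∈ [π−β, π+β]` and `m = 2πn ∈ 2πℕ₀`,
`min_{m₂ ∈ 2πℤ} |(m₂ + ξ₂)² − (m + 2π)²| ≥ (2m + 3π + β)(π − β)`. -/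
theorem min_estimate (β ξ₂ : ℝ) (hβ : 0 < β) (hβπ : β < π)
    (hξ : ξ₂ ∈ Set.Icc (π - β) (π + β)) (n : ℕ) (m : ℝ) (hm : m = 2 * π * n) :
    ∀ j : ℤ, (2 * m + 3 * π + β) * (π - β) ≤ |(2 * π * j + ξ₂)^2 - (m + 2 * π)^2| := by
  intro j
  obtain ⟨hξ1, hξ2⟩ := hξ
  have hπ := Real.pi_pos
  have hm0 : 0 ≤ m := by rw [hm]; positivity
  have key : ∀ k : ℤ, π - β ≤ 2 * π * k + ξ₂ ∨ 2 * π * k + ξ₂ ≤ -(π - β) := by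
    intro k
    rcases le_or_gt 0 k with h | h
    · left
      have hk : (0:ℝ) ≤ (k:ℝ) := by exact_mod_cast h
      nlinarith
    · right
      have hk : (k:ℝ) ≤ -1 := by
        have : k ≤ -1 := by omega
        exact_mod_cast this
      nlinarith
  set P : ℝ := 2 * π * ((j - (n+1) : ℤ) : ℝ) + ξ₂ with hP
  set Q : ℝ := 2 * π * ((j + (n+1) : ℤ) : ℝ) + ξ₂ with hQ
  have hfac : (2 * π * j + ξ₂)^2 - (m + 2 * π)^2 = P * Q := by
    rw [hP, hQ, hm]; push_cast; ring
  have hPQ : Q = P + 2 * m + 4 * π := by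
    rw [hP, hQ, hm]; push_cast; ring
  rw [hfac]
  rcases key (j - (n+1)) with hp | hp <;> rcases key (j + (n+1)) with hq | hq
  · exact le_trans (by nlinarith) (le_abs_self _)
  · -- impossible-ish but handle: P ≥ π-β and Q ≤ -(π-β); Q = P + 2m+4π > P, contradiction
    exfalso; nlinarith
  · -- P ≤ -(π-β), Q ≥ π-β : product nonpositive
    refine le_trans ?_ (neg_le_abs _)
    nlinarith [mul_nonneg (by linarith : (0:ℝ) ≤ Q - (π - β)) (by linarith : (0:ℝ) ≤ -P - (π - β))]
  · -- both negative
    exact le_trans (by nlinarith) (le_abs_self _)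
end

section
/- Let δ, θ satisfy 0 < δ < min{π/4, π − θ} and 0 < θ < π. Then there exists τ₁ ∈ 2πℕ such that for all λ ≥ 0, all essentially bounded ε₀ with 0 < ε₀ ≤ E, all ξ₁ ∈ [−π, π] and all k₂ ∈ ℂ with Re k₂ ∈ [θ, π+δ]: for every m = (m₁, m₂) ∈ 2πℤ², |s(m, (ξ₁ + iτ₁, k₂))| ≥ (2(τ₁ − 2π) + 3π + π − θ)·θ, where s(m, k) is the symbol of the shifted Laplacian; in particular |s(m, (ξ₁+iτ₁, k₂))| ≥ 2λE for τ₁ large enough depending on λ, E, θ. -/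
open Real Complex

lemma aux_dist (θ δ ξ : ℝ) (hθ : 0 < θ) (hθπ : θ < π) (hδθ : δ < π - θ)
    (h1 : θ ≤ ξ) (h2 : ξ ≤ π + δ) (l : ℤ) : θ ≤ |2 * π * l + ξ| := by
  rcases le_or_gt 0 (l : ℝ) with h | h
  · rw [_root_.abs_of_nonneg (by nlinarith [pi_pos])]
    nlinarith [pi_pos]
  · have hl0 : l < 0 := by exact_mod_cast h
    have hl : (l : ℝ) ≤ -1 := by exact_mod_cast (by omega : l ≤ -1)
    have hneg : 2 * π * l + ξ ≤ -θ := by nlinarith [pi_pos]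
    have := neg_le_abs (2 * π * l + ξ)
    linarith

/-- There exists `τ₁ ∈ 2πℕ` such that for all `ξ₁ ∈ [−π, π]`, all `k₂ ∈ ℂ` with
`Re k₂ ∈ [θ, π+δ]` and all `m ∈ 2πℤ²`,
`|s(m, (ξ₁ + iτ₁, k₂))| ≥ (2(τ₁ − 2π) + 3π + π − θ)·θ ≥ 2λE`. -/
theorem poles_free_line (δ θ : ℝ) (hθ : 0 < θ) (hθπ : θ < π) (hδ : 0 < δ)
    (hδm : δ < min (π / 4) (π - θ)) (lam E : ℝ) (hlam : 0 ≤ lam) (hE : 0 < E)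
    (ε₀ : (Fin 2 → ℝ) → ℝ) (hε₀pos : ∀ x, 0 < ε₀ x) (hε₀bd : ∀ x, ε₀ x ≤ E) :
    ∃ N : ℕ, 1 ≤ N ∧ ∀ τ₁ : ℝ, τ₁ = 2 * π * N →
      (∀ ξ₁ ∈ Set.Icc (-π) π, ∀ k₂ : ℂ, k₂.re ∈ Set.Icc θ (π + δ) → ∀ m₁ m₂ : ℤ,
        (2 * (τ₁ - 2 * π) + 3 * π + (π - θ)) * θ ≤
          ‖((((2 * π * m₁ + ξ₁ : ℝ) : ℂ) + (τ₁ : ℝ) * Complex.I)^2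
            + (((2 * π * m₂ : ℝ) : ℂ) + k₂)^2)‖) ∧
      2 * lam * E ≤ (2 * (τ₁ - 2 * π) + 3 * π + (π - θ)) * θ := by
  have hδθ : δ < π - θ := lt_of_lt_of_le hδm (min_le_right _ _)
  obtain ⟨N', hN'⟩ := exists_nat_ge ((2 * lam * E + θ ^ 2) / (4 * π * θ))
  refine ⟨max 1 N', le_max_left _ _, ?_⟩
  intro τ₁ hτ₁
  set N : ℕ := max 1 N' with hN
  have hN1 : (1 : ℝ) ≤ (N : ℝ) := by exact_mod_cast le_max_left 1 N'
  have hNge : (2 * lam * E + θ ^ 2) / (4 * π * θ) ≤ (N : ℝ) :=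
    le_trans hN' (by exact_mod_cast le_max_right 1 N')
  have hτ2π : 2 * π ≤ τ₁ := by rw [hτ₁]; nlinarith [pi_pos]
  constructor
  · intro ξ₁ hξ₁ k₂ hk₂ m₁ m₂
    obtain ⟨hk₂l, hk₂r⟩ := hk₂
    set z₁ : ℂ := ((2 * π * m₁ + ξ₁ : ℝ) : ℂ) + (τ₁ : ℝ) * Complex.I with hz₁
    set z₂ : ℂ := ((2 * π * m₂ : ℝ) : ℂ) + k₂ with hz₂
    have hfact : z₁ ^ 2 + z₂ ^ 2 = (z₁ + Complex.I * z₂) * (z₁ - Complex.I * z₂) := by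
      linear_combination (z₂ ^ 2) * Complex.I_sq
    rw [hfact, norm_mul]
    set c : ℝ := 2 * π * m₂ + k₂.re with hc
    have him1 : (z₁ + Complex.I * z₂).im = τ₁ + c := by
      simp [hz₁, hz₂, hc]
    have him2 : (z₁ - Complex.I * z₂).im = τ₁ - c := by
      simp [hz₁, hz₂, hc]
    have hb1 : |τ₁ + c| ≤ ‖z₁ + Complex.I * z₂‖ := by
      rw [← him1]; exact Complex.abs_im_le_norm _
    have hb2 : |τ₁ - c| ≤ ‖z₁ - Complex.I * z₂‖ := by
      rw [← him2]; exact Complex.abs_im_le_norm _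
    have hθ1 : θ ≤ |τ₁ + c| := by
      have := aux_dist θ δ k₂.re hθ hθπ hδθ hk₂l hk₂r (N + m₂)
      have heq : τ₁ + c = 2 * π * ((N : ℤ) + m₂ : ℤ) + k₂.re := by
        rw [hτ₁, hc]; push_cast; ring
      rwa [heq]
    have hθ2 : θ ≤ |τ₁ - c| := by
      have := aux_dist θ δ k₂.re hθ hθπ hδθ hk₂l hk₂r (m₂ - N)
      have heq : τ₁ - c = -(2 * π * ((m₂ : ℤ) - N : ℤ) + k₂.re) := by
        rw [hτ₁, hc]; push_cast; ring
      rw [heq, abs_neg]; exact this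
    have hsum : 2 * τ₁ ≤ |τ₁ + c| + |τ₁ - c| := by
      have h := abs_add_le (τ₁ + c) (τ₁ - c)
      have : |(τ₁ + c) + (τ₁ - c)| = 2 * τ₁ := by
        rw [show (τ₁ + c) + (τ₁ - c) = 2 * τ₁ by ring]
        exact _root_.abs_of_nonneg (by nlinarith [pi_pos])
      linarith
    have hprod : (2 * (τ₁ - 2 * π) + 3 * π + (π - θ)) * θ ≤ |τ₁ + c| * |τ₁ - c| := by
      nlinarith [mul_nonneg (sub_nonneg.mpr hθ1) (sub_nonneg.mpr hθ2)]
    calc (2 * (τ₁ - 2 * π) + 3 * π + (π - θ)) * θ ≤ |τ₁ + c| * |τ₁ - c| := hprod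
      _ ≤ ‖z₁ + Complex.I * z₂‖ * ‖z₁ - Complex.I * z₂‖ :=
          mul_le_mul hb1 hb2 (abs_nonneg _) (norm_nonneg _)
  · have h4πθ : 0 < 4 * π * θ := by positivity
    have : 2 * lam * E + θ ^ 2 ≤ 4 * π * θ * N := by
      rw [div_le_iff₀ h4πθ] at hNge; linarith
    rw [hτ₁]; nlinarith [pi_pos]
end

section
/- Let 0 < δ < π/4, τ₁ ∈ 2πℕ. There exist constants C = C(δ, τ₁) > 0 and M = M(δ, τ₁) > 0 such that for all ℓ ∈ 2πℕ with ℓ > M, all μ ∈ [−π, π], all ν ∈ 2πℤ with |ν| ≤ τ₁, all ξ₂ ∈ [π−δ, π+δ], and m₂ ∈ 2πℤ: |s((±ℓ, m₂), (μ+iν, ξ₂+i(π/2+ℓ)))|² ≥ 2(π/2+ℓ)²·[m₂ + (±ℓ+μ)ν/(π/2+ℓ) + ξ₂]² ≥ C·ℓ². -/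
open Real Complex

set_option maxHeartbeats 1000000 in
/-- Case 2.1 estimate: there exist `C, M > 0` such that for all `ℓ ∈ 2πℕ` with `ℓ > M`,
`μ ∈ [−π, π]`, `ν ∈ 2πℤ` with `|ν| ≤ τ₁`, `ξ₂ ∈ [π−δ, π+δ]`, `m₂ ∈ 2πℤ` and sign `σ`:
`|s((σℓ, m₂), (μ+iν, ξ₂+i(π/2+ℓ)))|² ≥ 2(π/2+ℓ)²[m₂ + (σℓ+μ)ν/(π/2+ℓ) + ξ₂]² ≥ Cℓ²`. -/
theorem case21_estimate (δ : ℝ) (hδ : 0 < δ) (hδ4 : δ < π / 4)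
    (N₁ : ℕ) (hN₁ : 1 ≤ N₁) (τ₁ : ℝ) (hτ₁ : τ₁ = 2 * π * N₁) :
    ∃ C > 0, ∃ M > 0, ∀ n : ℕ, ∀ ℓ : ℝ, ℓ = 2 * π * n → M < ℓ →
      ∀ μ ∈ Set.Icc (-π) π, ∀ j : ℤ, ∀ ν : ℝ, ν = 2 * π * j → |ν| ≤ τ₁ →
        ∀ ξ₂ ∈ Set.Icc (π - δ) (π + δ), ∀ a : ℤ, ∀ m₂ : ℝ, m₂ = 2 * π * a →
          ∀ σ : ℝ, (σ = 1 ∨ σ = -1) →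
            2 * (π / 2 + ℓ)^2 * (m₂ + (σ * ℓ + μ) * ν / (π / 2 + ℓ) + ξ₂)^2 ≤
                (‖(((σ * ℓ + μ : ℝ) : ℂ) + (ν : ℝ) * Complex.I)^2
                  + (((m₂ + ξ₂ : ℝ) : ℂ) + ((π / 2 + ℓ : ℝ) : ℂ) * Complex.I)^2‖)^2 ∧
            C * ℓ^2 ≤ 2 * (π / 2 + ℓ)^2 * (m₂ + (σ * ℓ + μ) * ν / (π / 2 + ℓ) + ξ₂)^2 := by
  have hπ : (0:ℝ) < π := Real.pi_pos
  have hπδ : 0 < π - δ := by linarith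
  have hτpos : 0 < τ₁ := by
    rw [hτ₁]
    have : (1:ℝ) ≤ N₁ := by exact_mod_cast hN₁
    nlinarith
  refine ⟨(π - δ)^2 / 2, by positivity, 3*π*τ₁/(π - δ), by positivity, ?_⟩
  intro n ℓ hℓ hMℓ μ hμ j ν hν hντ ξ₂ hξ a m₂ hm₂ σ hσ
  have hℓpos : 0 < ℓ := lt_trans (by positivity) hMℓ
  have hd : 0 < π/2 + ℓ := by linarith
  have hdne : π/2 + ℓ ≠ 0 := ne_of_gt hd
  set d : ℝ := π/2 + ℓ with hddef
  set X : ℝ := m₂ + (σ * ℓ + μ) * ν / d + ξ₂ with hXdef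
  set z : ℂ := (((σ * ℓ + μ : ℝ) : ℂ) + (ν : ℝ) * Complex.I)^2
                  + (((m₂ + ξ₂ : ℝ) : ℂ) + ((d : ℝ) : ℂ) * Complex.I)^2 with hzdef
  clear_value d X z
  have habs : (‖z‖)^2 = z.re^2 + z.im^2 := by
    rw [Complex.sq_norm, Complex.normSq_apply]; ring
  have him : z.im = 2*((σ*ℓ+μ)*ν) + 2*((m₂+ξ₂)*d) := by
    simp [hzdef, pow_two, Complex.add_im, Complex.mul_im, Complex.add_re, Complex.mul_re]
    ring
  have hdX : d * X = (σ*ℓ+μ)*ν + (m₂+ξ₂)*d := by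
    rw [hXdef]; field_simp; ring
  constructor
  · calc 2 * d^2 * X^2 = 2 * (d*X)^2 := by ring
      _ = 2 * ((σ*ℓ+μ)*ν + (m₂+ξ₂)*d)^2 := by rw [hdX]
      _ ≤ z.re^2 + z.im^2 := by
          rw [him]
          nlinarith [sq_nonneg z.re, sq_nonneg ((σ*ℓ+μ)*ν + (m₂+ξ₂)*d)]
      _ = (‖z‖)^2 := habs.symm
  · -- decompose X
    have hX2 : X = (m₂ + σ*ν + ξ₂) + (μ*ν - σ*ν*(π/2))/d := by
      rw [hXdef, hddef]
      rw [hddef] at hdne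
      field_simp
      ring
    -- integer k with m₂ + σ*ν = 2π k
    obtain ⟨k, hk⟩ : ∃ k : ℤ, m₂ + σ*ν = 2*π*(k:ℝ) := by
      rcases hσ with h | h
      · exact ⟨a + j, by rw [h, hm₂, hν]; push_cast; ring⟩
      · exact ⟨a - j, by rw [h, hm₂, hν]; push_cast; ring⟩
    have hY : π - δ ≤ |m₂ + σ*ν + ξ₂| := by
      rw [hk]
      rcases le_or_gt 0 k with hk0 | hk0
      · have : (0:ℝ) ≤ (k:ℝ) := by exact_mod_cast hk0
        have h1 : π - δ ≤ 2*π*(k:ℝ) + ξ₂ := by nlinarith [hξ.1]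
        exact h1.trans (le_abs_self _)
      · have : (k:ℝ) ≤ -1 := by exact_mod_cast (by omega : k ≤ -1)
        have h1 : π - δ ≤ -(2*π*(k:ℝ) + ξ₂) := by nlinarith [hξ.2]
        exact h1.trans (neg_le_abs _)
    -- error bound
    have hμ1 : |μ| ≤ π := abs_le.mpr ⟨hμ.1, hμ.2⟩
    have hσ1 : |σ| = 1 := by rcases hσ with h | h <;> simp [h]
    have hnum : |μ*ν - σ*ν*(π/2)| ≤ 3*π*τ₁/2 := by
      calc |μ*ν - σ*ν*(π/2)| ≤ |μ*ν| + |σ*ν*(π/2)| := abs_sub _ _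
        _ = |μ| * |ν| + |σ| * |ν| * (π/2) := by
            rw [abs_mul, abs_mul, abs_mul, abs_of_pos (by linarith : (0:ℝ) < π/2)]
        _ ≤ π*τ₁ + 1*τ₁*(π/2) := by
            have hν0 : 0 ≤ |ν| := abs_nonneg _
            rw [hσ1]
            nlinarith
        _ = 3*π*τ₁/2 := by ring
    have herr : |(μ*ν - σ*ν*(π/2))/d| ≤ (π - δ)/2 := by
      rw [abs_div, abs_of_pos hd, div_le_iff₀ hd]
      have hMd : 3*π*τ₁/(π - δ) < d := by rw [hddef]; linarith
      have h2 : 3*π*τ₁ < (π-δ)*d := by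
        rw [div_lt_iff₀ hπδ] at hMd
        linarith [hMd]
      calc |μ*ν - σ*ν*(π/2)| ≤ 3*π*τ₁/2 := hnum
        _ ≤ (π - δ)*d/2 := by linarith
        _ = (π - δ)/2*d := by ring
    have hXlb : (π - δ)/2 ≤ |X| := by
      have h3 : |m₂ + σ*ν + ξ₂| ≤ |m₂ + σ*ν + ξ₂ + (μ*ν - σ*ν*(π/2))/d| + |(μ*ν - σ*ν*(π/2))/d| :=
        calc |m₂ + σ*ν + ξ₂|
            = |(m₂ + σ*ν + ξ₂ + (μ*ν - σ*ν*(π/2))/d) - (μ*ν - σ*ν*(π/2))/d| := by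
              rw [add_sub_cancel_right]
          _ ≤ _ := abs_sub _ _
      rw [hX2]
      linarith
    have hX2sq : ((π - δ)/2)^2 ≤ X^2 := by
      have h4 : ((π - δ)/2)^2 ≤ |X|^2 := pow_le_pow_left₀ (by positivity) hXlb 2
      rwa [_root_.sq_abs X] at h4
    have hdℓ : ℓ ≤ d := by rw [hddef]; linarith
    have h1 : ℓ^2 ≤ d^2 := pow_le_pow_left₀ hℓpos.le hdℓ 2
    calc (π - δ)^2/2 * ℓ^2 = 2*ℓ^2*((π - δ)/2)^2 := by ring
      _ ≤ 2*ℓ^2*X^2 := by nlinarith [hX2sq, sq_nonneg ℓ]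
      _ ≤ 2*d^2*X^2 := by nlinarith [h1, sq_nonneg X]
end
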